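/- Let u = 2^{n_1+1}(2^{k_1} − 1) + 2^{n_1} − 1 and v = 2^{n_2+1}(2^{k_2} − 1) + 2^{n_2} − 1 with n_1 ≥ k_1 + 2, n_2 ≥ k_2 + 2, k_1 ≥ k_2, n_2 > k_1 + 1, and n_1 = n_2 + k_2 + 1. Then s_2(u·v) = n_2 + 1. -/
import Mathlib

lemma sum_digits_two_pow_sub_one : ∀ n : ℕ, (Nat.digits 2 (2 ^ n - 1)).sum = n
  | 0 => by simp
  | (n+1) => by
    have h1 : 1 ≤ 2 ^ n := Nat.one_le_two_pow
    have h : 2 ^ (n+1) - 1 = 2 * (2 ^ n - 1) + 1 := by rw [pow_succ]; omega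
    have hm : (2 * (2 ^ n - 1) + 1) % 2 = 1 := by omega
    have hd : (2 * (2 ^ n - 1) + 1) / 2 = 2 ^ n - 1 := by omega
    rw [h, Nat.digits_def' (by norm_num : (1:ℕ) < 2) (by omega), hm, hd,
      List.sum_cons, sum_digits_two_pow_sub_one n]; omega

lemma sum_digits_split (t n m : ℕ) (hn : n < 2 ^ t) :
    (Nat.digits 2 (n + 2 ^ t * m)).sum
      = (Nat.digits 2 n).sum + (Nat.digits 2 m).sum := by
  rcases Nat.eq_zero_or_pos m with rfl | hm
  · simp
  have hlen : (Nat.digits 2 n).length ≤ t := by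
    rcases Nat.eq_zero_or_pos n with rfl | hn0
    · simp
    · rw [Nat.digits_len 2 n (by norm_num) hn0.ne']
      have := Nat.log_lt_of_lt_pow hn0.ne' hn
      omega
  have he : n + 2 ^ t * m
      = n + 2 ^ ((Nat.digits 2 n).length + (t - (Nat.digits 2 n).length)) * m := by
    rw [Nat.add_sub_cancel' hlen]
  rw [he, ← Nat.digits_append_zeroes_append_digits one_lt_two hm]
  simp [List.sum_append]

theorem uv_digit_sum_case2 (k₁ k₂ n₁ n₂ : ℕ)
    (h1 : k₁ + 2 ≤ n₁) (h2 : k₂ + 2 ≤ n₂) (h3 : k₂ ≤ k₁) (h4 : k₁ + 1 < n₂)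
    (h5 : n₁ = n₂ + k₂ + 1) :
    (Nat.digits 2 ((2 ^ (n₁ + 1) * (2 ^ k₁ - 1) + 2 ^ n₁ - 1) *
      (2 ^ (n₂ + 1) * (2 ^ k₂ - 1) + 2 ^ n₂ - 1))).sum = n₂ + 1 := by
  subst h5
  obtain ⟨e, rfl⟩ : ∃ e, k₁ = k₂ + e := ⟨k₁ - k₂, by omega⟩
  obtain ⟨c, rfl⟩ : ∃ c, n₂ = k₂ + e + c + 2 := ⟨n₂ - (k₂ + e) - 2, by omega⟩
  set b := k₂
  set Q : ℕ := (2 ^ e - 1) + 2 ^ (e + 1) * (2 ^ b - 1) with hQ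
  set M : ℕ := (2 ^ (c + 1) - 1) + 2 ^ (c + 1) * (2 ^ (b + 1) * Q) with hM
  set W : ℕ := 1 + 2 ^ (b + e + b + 2) * M with hW
  have key : (2 ^ (b + e + c + 2 + b + 1 + 1) * (2 ^ (b + e) - 1)
        + 2 ^ (b + e + c + 2 + b + 1) - 1) *
      (2 ^ (b + e + c + 2 + 1) * (2 ^ b - 1) + 2 ^ (b + e + c + 2) - 1)
      = 1 + 2 ^ (b + e + c + 2) * W := by
    have hb : 1 ≤ 2 ^ b := Nat.one_le_two_pow
    have he' : 1 ≤ 2 ^ e := Nat.one_le_two_pow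
    have hc : 1 ≤ 2 ^ (c + 1) := Nat.one_le_two_pow
    have hbe : 1 ≤ 2 ^ (b + e) := Nat.one_le_two_pow
    have hA : 1 ≤ 2 ^ (b + e + c + 2 + b + 1 + 1) * (2 ^ (b + e) - 1)
        + 2 ^ (b + e + c + 2 + b + 1) := le_add_of_le_right Nat.one_le_two_pow
    have hB : 1 ≤ 2 ^ (b + e + c + 2 + 1) * (2 ^ b - 1) + 2 ^ (b + e + c + 2) :=
      le_add_of_le_right Nat.one_le_two_pow
    rw [hW, hM, hQ]
    zify [hb, he', hc, hbe, hA, hB]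
    ring
  rw [key, sum_digits_split _ _ _ (Nat.one_lt_two_pow_iff.mpr (by omega))]
  rw [hW, sum_digits_split _ _ _ (Nat.one_lt_two_pow_iff.mpr (by omega))]
  rw [hM, sum_digits_split _ _ _
    (by have : 1 ≤ 2 ^ (c + 1) := Nat.one_le_two_pow; omega)]
  have hQ0 : (Nat.digits 2 (2 ^ (b + 1) * Q)).sum = b + e := by
    have := sum_digits_split (b + 1) 0 Q (by positivity)
    simp only [Nat.zero_add, Nat.digits_zero, List.sum_nil] at this
    rw [this, hQ, sum_digits_split _ _ _
      (by have : 1 ≤ 2 ^ e := Nat.one_le_two_pow;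
          have : 2 ^ (e+1) = 2 * 2 ^ e := by ring
          omega),
      sum_digits_two_pow_sub_one, sum_digits_two_pow_sub_one]
    omega
  rw [hQ0, sum_digits_two_pow_sub_one]
  norm_num
  omega
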